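/- Let f and g be norms on ℝ^p with dual norms f* and g*, let (a, b) be a linear classifier with a ≠ 0, let ρ > 0, let x_F ∈ ℝ^p satisfy ⟪a, x_F⟫ < b, and let x_RCF be an optimal robust counterfactual of x_F under f with robustness norm g and radius ρ, with x_RCF ≠ x_F. Assume there is a constant C such that g*(w) ≤ C · f*(w) for all w ∈ ℝ^p. Set v := (1 / f(x_RCF − x_F)) • (x_RCF − x_F). Then for every d ∈ ℝ with d ≥ ρ · C, the point x̄ := x_RCF − d • v satisfies ⟪a, x̄⟫ ≤ b, i.e., x̄ has the same classification as x_F. -/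

import Mathlib

open Finset

noncomputable section

/-- The standard inner product on `Fin p → ℝ`. -/
def dot {p : ℕ} (a x : Fin p → ℝ) : ℝ := ∑ k, a k * x k

/-- `f` is a norm on `ℝ^p`. -/
def IsNorm {p : ℕ} (f : (Fin p → ℝ) → ℝ) : Prop :=
  (∀ x, f x = 0 ↔ x = 0) ∧ (∀ (c : ℝ) (x : Fin p → ℝ), f (c • x) = |c| * f x) ∧
    (∀ x y, f (x + y) ≤ f x + f y)

/-- The dual norm `f*(w) = sup { ⟪w, v⟫ : f v ≤ 1 }`. -/
def dualNorm {p : ℕ} (f : (Fin p → ℝ) → ℝ) (w : Fin p → ℝ) : ℝ :=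
  sSup {t : ℝ | ∃ v : Fin p → ℝ, f v ≤ 1 ∧ t = dot w v}

/-- `xCF` is an optimal counterfactual of the factual `xF` (classified 'No') under norm `f`. -/
def IsOptCF {p : ℕ} (a : Fin p → ℝ) (b : ℝ) (f : (Fin p → ℝ) → ℝ)
    (xF xCF : Fin p → ℝ) : Prop :=
  b ≤ dot a xCF ∧ ∀ z : Fin p → ℝ, b ≤ dot a z → f (xCF - xF) ≤ f (z - xF)

/-- `xRCF` is an optimal robust counterfactual of the factual `xF` (classified 'No')
under norm `f`, with robustness norm `g` and radius `ρ`. -/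
def IsOptRCF {p : ℕ} (a : Fin p → ℝ) (b : ℝ) (f g : (Fin p → ℝ) → ℝ) (ρ : ℝ)
    (xF xRCF : Fin p → ℝ) : Prop :=
  (∀ s : Fin p → ℝ, g s ≤ ρ → b ≤ dot a (xRCF + s)) ∧
    ∀ z : Fin p → ℝ, (∀ s : Fin p → ℝ, g s ≤ ρ → b ≤ dot a (z + s)) →
      f (xRCF - xF) ≤ f (z - xF)

/-- `w` is a subgradient of `f` at `x₀`. -/
def IsSubgradient {p : ℕ} (f : (Fin p → ℝ) → ℝ) (x₀ w : Fin p → ℝ) : Prop :=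
  ∀ y : Fin p → ℝ, f x₀ + dot w (y - x₀) ≤ f y

/-! ### Auxiliary lemmas -/

lemma dot_smul_right {p : ℕ} (a : Fin p → ℝ) (c : ℝ) (x : Fin p → ℝ) :
    dot a (c • x) = c * dot a x := by
  simp [dot, Finset.mul_sum, mul_left_comm]

lemma dot_sub_right {p : ℕ} (a x y : Fin p → ℝ) :
    dot a (x - y) = dot a x - dot a y := by
  simp [dot, mul_sub, Finset.sum_sub_distrib]

lemma dot_add_right {p : ℕ} (a x y : Fin p → ℝ) :
    dot a (x + y) = dot a x + dot a y := by
  simp [dot, mul_add, Finset.sum_add_distrib]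

lemma IsNorm.zero {p : ℕ} {f : (Fin p → ℝ) → ℝ} (hf : IsNorm f) : f 0 = 0 :=
  (hf.1 0).mpr rfl

lemma IsNorm.nonneg {p : ℕ} {f : (Fin p → ℝ) → ℝ} (hf : IsNorm f) (x : Fin p → ℝ) :
    0 ≤ f x := by
  have h := hf.2.2 x (-x)
  rw [add_neg_cancel] at h
  have h2 : f (-x) = f x := by
    have := hf.2.1 (-1) x; simpa using this
  have h0 := hf.zero
  linarith

lemma IsNorm.pos {p : ℕ} {f : (Fin p → ℝ) → ℝ} (hf : IsNorm f) {x : Fin p → ℝ}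
    (hx : x ≠ 0) : 0 < f x := by
  rcases lt_or_eq_of_le (hf.nonneg x) with h | h
  · exact h
  · exact absurd ((hf.1 x).mp h.symm) hx

/-- A norm on a finite-dimensional space is bounded below by a multiple of the sup norm. -/
lemma IsNorm.exists_lb {p : ℕ} (hp : 1 ≤ p) {f : (Fin p → ℝ) → ℝ} (hf : IsNorm f) :
    ∃ m : ℝ, 0 < m ∧ ∀ v : Fin p → ℝ, m * ‖v‖ ≤ f v := by
  set K : ℝ := ∑ i : Fin p, f (fun j => if i = j then 1 else 0) with hK
  have hK0 : 0 ≤ K := Finset.sum_nonneg fun i _ => hf.nonneg _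
  have hub : ∀ x : Fin p → ℝ, f x ≤ K * ‖x‖ := by
    intro x
    calc f x = f (∑ i : Fin p, x i • fun j => if i = j then (1:ℝ) else 0) := by
          rw [← pi_eq_sum_univ x]
      _ ≤ ∑ i : Fin p, f (x i • fun j => if i = j then (1:ℝ) else 0) :=
          Finset.le_sum_of_subadditive f hf.zero.le hf.2.2 _ _
      _ ≤ ∑ i : Fin p, ‖x‖ * f (fun j => if i = j then (1:ℝ) else 0) := by
          refine Finset.sum_le_sum fun i _ => ?_
          rw [hf.2.1]
          exact mul_le_mul_of_nonneg_right (by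
            simpa using norm_le_pi_norm x i) (hf.nonneg _)
      _ = K * ‖x‖ := by rw [← Finset.mul_sum, mul_comm]
  have hlip : LipschitzWith (Real.toNNReal K) f := by
    apply LipschitzWith.of_dist_le_mul
    intro x y
    rw [Real.dist_eq, Real.coe_toNNReal K hK0, dist_eq_norm]
    have h1 : f x - f y ≤ f (x - y) := by
      have := hf.2.2 (x - y) y; simp at this; linarith
    have h2 : f y - f x ≤ f (x - y) := by
      have h3 := hf.2.2 (y - x) x
      have h4 : f (y - x) = f (x - y) := by
        have h5 : f (-(x - y)) = f (x - y) := by simpa using hf.2.1 (-1) (x - y)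
        rwa [neg_sub] at h5
      rw [sub_add_cancel] at h3; linarith
    have := hub (x - y)
    rw [abs_sub_le_iff]; constructor <;> linarith
  haveI : Nonempty (Fin p) := ⟨⟨0, hp⟩⟩
  haveI : Nontrivial (Fin p → ℝ) := inferInstance
  have hsph : (Metric.sphere (0 : Fin p → ℝ) 1).Nonempty :=
    NormedSpace.sphere_nonempty.mpr zero_le_one
  obtain ⟨v₀, hv₀s, hv₀min⟩ :=
    (isCompact_sphere (0 : Fin p → ℝ) 1).exists_isMinOn hsph hlip.continuous.continuousOn
  have hv₀norm : ‖v₀‖ = 1 := by simpa using hv₀s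
  have hv₀ne : v₀ ≠ 0 := by
    intro h; rw [h] at hv₀norm; simp at hv₀norm
  refine ⟨f v₀, hf.pos hv₀ne, fun v => ?_⟩
  rcases eq_or_ne v 0 with rfl | hv
  · simp [hf.zero]
  · have hnv : 0 < ‖v‖ := norm_pos_iff.mpr hv
    have hw : (‖v‖⁻¹ • v) ∈ Metric.sphere (0 : Fin p → ℝ) 1 := by
      simp [norm_smul, abs_of_pos (inv_pos.mpr hnv), inv_mul_cancel₀ hnv.ne']
    have hmin := hv₀min hw
    have : f v = ‖v‖ * f (‖v‖⁻¹ • v) := by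
      rw [hf.2.1, abs_of_pos (inv_pos.mpr hnv)]
      field_simp
    rw [this, mul_comm (f v₀)]
    exact mul_le_mul_of_nonneg_left hmin hnv.le

lemma zero_mem_dualSet {p : ℕ} {f : (Fin p → ℝ) → ℝ} (hf : IsNorm f) (w : Fin p → ℝ) :
    (0:ℝ) ∈ {t : ℝ | ∃ v : Fin p → ℝ, f v ≤ 1 ∧ t = dot w v} :=
  ⟨0, by simp [hf.zero], by simp [dot]⟩

lemma bddAbove_dualSet {p : ℕ} (hp : 1 ≤ p) {f : (Fin p → ℝ) → ℝ} (hf : IsNorm f)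
    (w : Fin p → ℝ) :
    BddAbove {t : ℝ | ∃ v : Fin p → ℝ, f v ≤ 1 ∧ t = dot w v} := by
  obtain ⟨m, hm, hlb⟩ := hf.exists_lb hp
  refine ⟨(∑ k, |w k|) * (1/m), ?_⟩
  rintro t ⟨v, hv, rfl⟩
  have hvn : ‖v‖ ≤ 1/m := by
    rw [le_div_iff₀ hm, mul_comm]
    exact le_trans (hlb v) hv
  calc dot w v ≤ ∑ k, |w k| * |v k| := by
        refine Finset.sum_le_sum fun k _ => ?_
        calc w k * v k ≤ |w k * v k| := le_abs_self _
          _ = |w k| * |v k| := abs_mul _ _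
    _ ≤ ∑ k, |w k| * (1/m) := by
        refine Finset.sum_le_sum fun k _ => ?_
        exact mul_le_mul_of_nonneg_left (le_trans (norm_le_pi_norm v k) hvn) (abs_nonneg _)
    _ = (∑ k, |w k|) * (1/m) := by rw [Finset.sum_mul]

lemma dualNorm_nonneg' {p : ℕ} (hp : 1 ≤ p) {f : (Fin p → ℝ) → ℝ} (hf : IsNorm f)
    (w : Fin p → ℝ) : 0 ≤ dualNorm f w :=
  le_csSup (bddAbove_dualSet hp hf w) (zero_mem_dualSet hf w)

lemma dot_le_dualNorm_mul {p : ℕ} (hp : 1 ≤ p) {f : (Fin p → ℝ) → ℝ} (hf : IsNorm f)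
    (w v : Fin p → ℝ) : dot w v ≤ dualNorm f w * f v := by
  rcases eq_or_ne v 0 with rfl | hv
  · simp [dot, hf.zero]
  · have hF : 0 < f v := hf.pos hv
    have hmem : ((f v)⁻¹ * dot w v) ∈ {t : ℝ | ∃ u : Fin p → ℝ, f u ≤ 1 ∧ t = dot w u} := by
      refine ⟨(f v)⁻¹ • v, ?_, ?_⟩
      · rw [hf.2.1, abs_of_pos (inv_pos.mpr hF), inv_mul_cancel₀ hF.ne']
      · rw [dot_smul_right]
    have := le_csSup (bddAbove_dualSet hp hf w) hmem
    calc dot w v = f v * ((f v)⁻¹ * dot w v) := by field_simp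
      _ ≤ f v * dualNorm f w := mul_le_mul_of_nonneg_left this hF.le
      _ = dualNorm f w * f v := mul_comm _ _

lemma dualNorm_pos {p : ℕ} (hp : 1 ≤ p) {f : (Fin p → ℝ) → ℝ} (hf : IsNorm f)
    {a : Fin p → ℝ} (ha : a ≠ 0) : 0 < dualNorm f a := by
  have haa : 0 < dot a a := by
    obtain ⟨k, hk⟩ := Function.ne_iff.mp ha
    exact Finset.sum_pos' (fun k _ => mul_self_nonneg _)
      ⟨k, Finset.mem_univ k, mul_self_pos.mpr hk⟩
  have hfa : 0 < f a := hf.pos ha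
  have hmem : ((f a)⁻¹ * dot a a) ∈ {t : ℝ | ∃ u : Fin p → ℝ, f u ≤ 1 ∧ t = dot a u} := by
    refine ⟨(f a)⁻¹ • a, ?_, ?_⟩
    · rw [hf.2.1, abs_of_pos (inv_pos.mpr hfa), inv_mul_cancel₀ hfa.ne']
    · rw [dot_smul_right]
  exact lt_of_lt_of_le (by positivity) (le_csSup (bddAbove_dualSet hp hf a) hmem)

/-- Lemma 6: if `g*(w) ≤ C·f*(w)` for all `w`, then moving back from the robust
counterfactual along the counterfactual direction by any distance `d ≥ ρ·C` gives a
point with the same classification as the factual instance. -/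
theorem rcf_backtrack_same_classification {p : ℕ} (hp : 1 ≤ p)
    (f g : (Fin p → ℝ) → ℝ) (hf : IsNorm f) (hg : IsNorm g)
    (a : Fin p → ℝ) (ha : a ≠ 0) (b : ℝ) (ρ : ℝ) (hρ : 0 < ρ)
    (xF xRCF : Fin p → ℝ) (hxF : dot a xF < b)
    (hopt : IsOptRCF a b f g ρ xF xRCF) (hne : xRCF ≠ xF)
    (C : ℝ) (hC : ∀ w : Fin p → ℝ, dualNorm g w ≤ C * dualNorm f w) :
    ∀ d : ℝ, ρ * C ≤ d →
      dot a (xRCF - d • ((1 / f (xRCF - xF)) • (xRCF - xF))) ≤ b := by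
  intro d hd
  obtain ⟨hfeas, hmin⟩ := hopt
  have hune : xRCF - xF ≠ 0 := sub_ne_zero.mpr hne
  have hF : 0 < f (xRCF - xF) := hf.pos hune
  set u : Fin p → ℝ := xRCF - xF with hu
  set F : ℝ := f u with hFdef
  set G : ℝ := dualNorm g a with hGdef
  set Ff : ℝ := dualNorm f a with hFfdef
  have hG0 : 0 < G := dualNorm_pos hp hg ha
  have hFf0 : 0 < Ff := dualNorm_pos hp hf ha
  have hCpos : 0 < C := by nlinarith [hC a]
  -- lower bound on dot a xRCF from robust feasibility
  have hA : b + ρ * G ≤ dot a xRCF := by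
    refine le_of_forall_pos_le_add fun ε hε => ?_
    have hlt : G - ε / ρ < G := sub_lt_self _ (by positivity)
    obtain ⟨t, htS, ht⟩ := exists_lt_of_lt_csSup ⟨0, zero_mem_dualSet hg a⟩ hlt
    obtain ⟨s', hs', rfl⟩ := htS
    have hgs : g ((-ρ) • s') ≤ ρ := by
      rw [hg.2.1, abs_neg, abs_of_pos hρ]
      nlinarith [hg.nonneg s']
    have hb := hfeas _ hgs
    rw [dot_add_right, dot_smul_right] at hb
    have h6 : ρ * (G - ε / ρ) < ρ * dot a s' := mul_lt_mul_of_pos_left ht hρ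
    have hρε : ρ * (ε / ρ) = ε := by field_simp
    rw [mul_sub, hρε] at h6
    linarith
  -- sufficient condition for robust feasibility
  have hsuff : ∀ z : Fin p → ℝ, b + ρ * G ≤ dot a z →
      ∀ s : Fin p → ℝ, g s ≤ ρ → b ≤ dot a (z + s) := by
    intro z hz s hs
    have h1 : dot a (-s) ≤ G * g (-s) := dot_le_dualNorm_mul hp hg a (-s)
    have h2 : g (-s) = g s := by simpa using hg.2.1 (-1) s
    have h3 : dot a (-s) = - dot a s := by simpa using dot_smul_right a (-1) s
    rw [h2, h3] at h1
    have h4 : G * g s ≤ G * ρ := mul_le_mul_of_nonneg_left hs hG0.le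
    rw [dot_add_right]
    linarith
  have hbig : 0 < b + ρ * G - dot a xF := by nlinarith
  -- upper bound on the dual norm of a
  have hiv : Ff * F ≤ b + ρ * G - dot a xF := by
    have hupper : ∀ t ∈ {t : ℝ | ∃ v : Fin p → ℝ, f v ≤ 1 ∧ t = dot a v},
        t ≤ (b + ρ * G - dot a xF) / F := by
      rintro t ⟨w, hw, rfl⟩
      rcases le_or_gt (dot a w) 0 with hle | hpos
      · exact le_trans hle (div_nonneg hbig.le hF.le)
      · set c : ℝ := (b + ρ * G - dot a xF) / dot a w with hc
        have hcpos : 0 < c := div_pos hbig hpos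
        have hz : dot a (xF + c • w) = b + ρ * G := by
          rw [dot_add_right, dot_smul_right, hc]
          field_simp
          ring
        have hfe := hsuff (xF + c • w) (le_of_eq hz.symm)
        have hopt2 := hmin _ hfe
        have heq : f (xF + c • w - xF) = c * f w := by
          rw [add_sub_cancel_left, hf.2.1, abs_of_pos hcpos]
        rw [heq] at hopt2
        have h5 : F ≤ c := le_trans hopt2 (by nlinarith)
        have h7 := (le_div_iff₀ hpos).mp h5
        rw [le_div_iff₀ hF]
        nlinarith
    have hFfle := csSup_le ⟨0, zero_mem_dualSet hf a⟩ hupper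
    exact (le_div_iff₀ hF).mp hFfle
  have hv2 : dot a u ≤ Ff * F := dot_le_dualNorm_mul hp hf a u
  have husub : dot a u = dot a xRCF - dot a xF := by rw [hu, dot_sub_right]
  have hub : dot a xRCF ≤ b + ρ * G := by linarith
  have hlb2 : Ff * F ≤ dot a u := by linarith
  rw [dot_sub_right, dot_smul_right, dot_smul_right]
  have hd0 : 0 ≤ d := le_trans (by positivity) hd
  have hkey : ρ * C * (Ff * F) ≤ d * dot a u :=
    mul_le_mul hd hlb2 (by positivity) hd0
  have h2 : ρ * G * F ≤ ρ * C * (Ff * F) := by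
    have hCa : G ≤ C * Ff := hC a
    nlinarith [mul_le_mul_of_nonneg_left hCa (mul_nonneg hρ.le hF.le)]
  have h3 : ρ * G * F ≤ d * dot a u := le_trans h2 hkey
  have h4 : ρ * G ≤ d * (1 / F * dot a u) := by
    calc ρ * G = ρ * G * F / F := by field_simp
      _ ≤ d * dot a u / F := by gcongr
      _ = d * (1 / F * dot a u) := by ring
  linarith
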